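/- Let d ≥ 1 be an integer and let (b_1,…,b_r) be a nonempty list of integers with every b_i ≥ 2. Then the Hirzebruch–Jung continued fraction [b_1,…,b_r] equals 4d/(2d−1) if and only if either d = 1 and the list is (4), or d ≥ 2 and the list is (3,2,…,2,3) with exactly d−2 intermediate entries equal to 2. -/

import Mathlib

/-- Hirzebruch–Jung continued fraction: `hjcf [b₁,…,b_r] = b₁ - 1/(b₂ - 1/(⋯ - 1/b_r))`.
(With the convention `hjcf [] = 0`, so that `hjcf [b] = b` since `1/0 = 0`.) -/
def hjcf : List ℚ → ℚ
  | [] => 0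
  | b :: l => b - 1 / hjcf l

/-- Hirzebruch–Jung continued fraction of a list of integers. -/
def hjcfZ (b : List ℤ) : ℚ := hjcf (b.map (fun x => (x : ℚ)))

lemma hjcfZ_nil : hjcfZ [] = 0 := rfl

lemma hjcfZ_cons (a : ℤ) (l : List ℤ) : hjcfZ (a :: l) = (a : ℚ) - 1 / hjcfZ l := rfl

lemma hjcfZ_one_lt : ∀ (l : List ℤ), (∀ x ∈ l, 2 ≤ x) → l ≠ [] → 1 < hjcfZ l := by
  intro l
  induction l with
  | nil => intro _ h; exact absurd rfl h
  | cons a t ih =>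
    intro h2 _
    have ha : (2 : ℚ) ≤ (a : ℚ) := by exact_mod_cast h2 a (List.mem_cons_self (a := a) (l := t))
    rw [hjcfZ_cons]
    rcases eq_or_ne t [] with rfl | ht
    · simp [hjcfZ_nil]; linarith
    · have h1 : 1 < hjcfZ t := ih (fun x hx => h2 x (List.mem_cons_of_mem _ hx)) ht
      have : 1 / hjcfZ t < 1 := by
        rw [div_lt_one (by linarith)]; linarith
      have hpos : 0 < 1 / hjcfZ t := by positivity
      linarith

lemma hjcfZ_inj : ∀ (l₁ l₂ : List ℤ), (∀ x ∈ l₁, 2 ≤ x) → (∀ x ∈ l₂, 2 ≤ x) →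
    hjcfZ l₁ = hjcfZ l₂ → l₁ = l₂ := by
  intro l₁
  induction l₁ with
  | nil =>
    intro l₂ _ h2 heq
    rcases eq_or_ne l₂ [] with rfl | h
    · rfl
    · exact absurd heq.symm (by have := hjcfZ_one_lt l₂ h2 h; simp [hjcfZ_nil]; linarith)
  | cons a t ih =>
    intro l₂ h1 h2 heq
    rcases l₂ with _ | ⟨b, s⟩
    · exact absurd heq (by have := hjcfZ_one_lt (a :: t) h1 (by simp); simp [hjcfZ_nil]; linarith)
    · rw [hjcfZ_cons, hjcfZ_cons] at heq
      -- bounds on the fractional parts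
      have frac : ∀ (l : List ℤ), (∀ x ∈ l, 2 ≤ x) → 0 ≤ 1 / hjcfZ l ∧ 1 / hjcfZ l < 1 := by
        intro l hl
        rcases eq_or_ne l [] with rfl | h
        · simp [hjcfZ_nil]
        · have h1 := hjcfZ_one_lt l hl h
          constructor
          · positivity
          · rw [div_lt_one (by linarith)]; linarith
      have ht := frac t (fun x hx => h1 x (List.mem_cons_of_mem _ hx))
      have hs := frac s (fun x hx => h2 x (List.mem_cons_of_mem _ hx))
      have hab : a = b := by
        have : ((a : ℚ) - b : ℚ) = 1 / hjcfZ t - 1 / hjcfZ s := by linarith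
        have habs : |((a - b : ℤ) : ℚ)| < 1 := by
          rw [abs_lt]; push_cast; constructor <;> linarith
        have : |(a - b : ℤ)| < 1 := by exact_mod_cast habs
        have h' := abs_lt.mp this
        omega
      subst hab
      have hts : 1 / hjcfZ t = 1 / hjcfZ s := by linarith
      have hts' : t = s := by
        rcases eq_or_ne t [] with rfl | hT
        · rcases eq_or_ne s [] with rfl | hS
          · rfl
          · exfalso
            have h1s := hjcfZ_one_lt s (fun x hx => h2 x (List.mem_cons_of_mem _ hx)) hS
            rw [hjcfZ_nil] at hts
            simp at hts
            have : (0:ℚ) < 1 / hjcfZ s := by positivity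
            linarith [hts.symm]
        · rcases eq_or_ne s [] with rfl | hS
          · exfalso
            have h1t := hjcfZ_one_lt t (fun x hx => h1 x (List.mem_cons_of_mem _ hx)) hT
            rw [hjcfZ_nil] at hts
            simp at hts
            have : (0:ℚ) < 1 / hjcfZ t := by positivity
            linarith
          · have h1t := hjcfZ_one_lt t (fun x hx => h1 x (List.mem_cons_of_mem _ hx)) hT
            have h1s := hjcfZ_one_lt s (fun x hx => h2 x (List.mem_cons_of_mem _ hx)) hS
            have : hjcfZ t = hjcfZ s := by
              field_simp at hts
              exact hts.symm
            exact ih s (fun x hx => h1 x (List.mem_cons_of_mem _ hx))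
              (fun x hx => h2 x (List.mem_cons_of_mem _ hx)) this
      rw [hts']

lemma hjcfZ_rep (n : ℕ) : hjcfZ (List.replicate n 2 ++ [3]) = (2 * n + 3) / (2 * n + 1) := by
  induction n with
  | zero => norm_num [hjcfZ_cons, hjcfZ_nil]
  | succ k ih =>
    have hpos : (0:ℚ) < 2 * k + 1 := by positivity
    rw [List.replicate_succ, List.cons_append, hjcfZ_cons, ih]
    push_cast
    rw [one_div_div]
    have h3 : (2 * (k:ℚ) + 3) ≠ 0 := by positivity
    have h1 : (2 * (k:ℚ) + 2 + 1) ≠ 0 := by positivity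
    field_simp
    ring

lemma hjcfZ_main (n : ℕ) :
    hjcfZ (3 :: (List.replicate n 2 ++ [3])) = (4 * n + 8) / (2 * n + 3) := by
  rw [hjcfZ_cons, hjcfZ_rep]
  have h3 : (2 * (n:ℚ) + 3) ≠ 0 := by positivity
  push_cast
  rw [one_div_div]
  field_simp
  ring

theorem stmt0 (d : ℤ) (hd : 1 ≤ d) (b : List ℤ) (hne : b ≠ []) (h2 : ∀ x ∈ b, 2 ≤ x) :
    hjcfZ b = ((4 * d : ℤ) : ℚ) / ((2 * d - 1 : ℤ) : ℚ) ↔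
      (d = 1 ∧ b = [4]) ∨
        (2 ≤ d ∧ b = 3 :: (List.replicate (d - 2).toNat 2 ++ [3])) := by
  rcases eq_or_lt_of_le hd with rfl | hd2
  · -- d = 1
    have hval : ((4 * (1:ℤ) : ℤ) : ℚ) / ((2 * (1:ℤ) - 1 : ℤ) : ℚ) = hjcfZ [4] := by
      norm_num [hjcfZ_cons, hjcfZ_nil]
    constructor
    · intro h
      left
      refine ⟨rfl, ?_⟩
      exact hjcfZ_inj b [4] h2 (by norm_num) (h.trans hval)
    · rintro (⟨_, rfl⟩ | ⟨hd', _⟩)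
      · exact hval.symm
      · omega
  · -- 2 ≤ d
    have hd2' : 2 ≤ d := hd2
    have hn : ((d - 2).toNat : ℤ) = d - 2 := Int.toNat_of_nonneg (by omega)
    have hval : hjcfZ (3 :: (List.replicate (d - 2).toNat 2 ++ [3]))
        = ((4 * d : ℤ) : ℚ) / ((2 * d - 1 : ℤ) : ℚ) := by
      rw [hjcfZ_main]
      have hnq : (((d-2).toNat : ℕ) : ℚ) = (d:ℚ) - 2 := by exact_mod_cast hn
      rw [hnq]
      push_cast
      congr 1 <;> ring
    constructor
    · intro h
      right
      refine ⟨hd2', ?_⟩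
      refine hjcfZ_inj b _ h2 ?_ (h.trans hval.symm)
      intro x hx
      simp [List.mem_replicate] at hx
      rcases hx with rfl | hx | rfl <;> omega
    · rintro (⟨rfl, _⟩ | ⟨_, rfl⟩)
      · omega
      · exact hval
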